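/- Let ψ be a predicate on finite nonempty multisets over a countable alphabet Σ that is stably computable in the anonymous asynchronous message-passing model under the local fairness condition (if some agent sends a message m infinitely often, every agent receives m infinitely often), with unbounded states and message sizes. Then ψ(x) = ψ(x') whenever the multisets x and x' have the same underlying set of values. -/

import Mathlib

/-- A protocol in the anonymous asynchronous message-passing model. -/
structure Protocol (A Msg St : Type*) where
  init : A → St
  send : St → Msg × St
  recv : St → Msg → St
  out : St → Bool

/-- An event: agent i sends a message, or agent i receives message m. -/
inductive Event (n : ℕ) (Msg : Type*) where
  | snd (i : Fin n)
  | rcv (i : Fin n) (m : Msg)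

/-- One step of the system: a configuration consists of the agents' states and
the multiset of messages in transit. -/
def StepRel {A Msg St : Type*} [DecidableEq Msg] (P : Protocol A Msg St) {n : ℕ}
    (ev : Event n Msg) (c c' : (Fin n → St) × Multiset Msg) : Prop :=
  match ev with
  | .snd i => c'.1 = Function.update c.1 i (P.send (c.1 i)).2 ∧
      c'.2 = (P.send (c.1 i)).1 ::ₘ c.2
  | .rcv i m => m ∈ c.2 ∧ c'.1 = Function.update c.1 i (P.recv (c.1 i) m) ∧
      c'.2 = c.2.erase m

/-- An infinite execution of protocol P on a population of n agents with
inputs x. -/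
structure Exec {A Msg St : Type*} [DecidableEq Msg] (P : Protocol A Msg St)
    (n : ℕ) (x : Fin n → A) where
  cfg : ℕ → (Fin n → St) × Multiset Msg
  ev : ℕ → Event n Msg
  init_cfg : cfg 0 = (fun i => P.init (x i), 0)
  step : ∀ t, StepRel P (ev t) (cfg t) (cfg (t + 1))

section
variable {A Msg St : Type*} [DecidableEq Msg] {P : Protocol A Msg St}
  {n : ℕ} {x : Fin n → A}

/-- Agent i sends message m at time t. -/
def SendsAt (e : Exec P n x) (i : Fin n) (m : Msg) (t : ℕ) : Prop :=
  e.ev t = .snd i ∧ (P.send ((e.cfg t).1 i)).1 = m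

/-- Agent i receives message m at time t. -/
def RecvAt (e : Exec P n x) (i : Fin n) (m : Msg) (t : ℕ) : Prop :=
  e.ev t = .rcv i m

/-- Agent i takes a step at time t. -/
def ActsAt (e : Exec P n x) (i : Fin n) (t : ℕ) : Prop :=
  e.ev t = .snd i ∨ ∃ m, e.ev t = .rcv i m

/-- Local fairness: every agent takes infinitely many steps, and if some agent
sends a message m infinitely often then every agent receives m infinitely
often. -/
def LocallyFair (e : Exec P n x) : Prop :=
  (∀ i : Fin n, ∀ T, ∃ t, T ≤ t ∧ ActsAt e i t) ∧
  (∀ m : Msg, (∃ i, ∀ T, ∃ t, T ≤ t ∧ SendsAt e i m t) →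
    ∀ j : Fin n, ∀ T, ∃ t, T ≤ t ∧ RecvAt e j m t)

end

/-- The input multiset of a population. -/
def inputMultiset {A : Type*} {n : ℕ} (x : Fin n → A) : Multiset A :=
  Multiset.map x Finset.univ.val

/-- P stably computes ψ under local fairness: in every locally fair execution,
all agents' outputs eventually stabilize to ψ of the input multiset. -/
def StablyComputes {A Msg St : Type*} [DecidableEq Msg] (P : Protocol A Msg St)
    (ψ : Multiset A → Bool) : Prop :=
  ∀ (n : ℕ), 0 < n → ∀ (x : Fin n → A) (e : Exec P n x), LocallyFair e →
    ∃ T, ∀ t, T ≤ t → ∀ i, P.out ((e.cfg t).1 i) = ψ (inputMultiset x)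

set_option linter.unusedSectionVars false
namespace AnonProof

section Canon
variable {A Msg St : Type*} [DecidableEq A] [DecidableEq Msg]

/-- The canonical per-input-value state used to synchronize executions. -/
structure CState (A Msg St : Type*) where
  sig : A → St
  ctr : Msg → ℕ

variable (P : Protocol A Msg St) (S : Finset A) (N : ℕ)

/-- Messages sent by the canonical states in one round. -/
def sentSet (f : A → St) : Finset Msg := S.image fun a => (P.send (f a)).1

/-- Counter after the send phase. -/
def ctr1 (f : A → St) (c : Msg → ℕ) : Msg → ℕ := fun m =>
  c m + (if m ∈ sentSet P S f then 1 else 0)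

/-- Messages delivered (to everyone) this round. -/
def Dset (s : CState A Msg St) : Finset Msg :=
  (sentSet P S s.sig).filter fun m => N ≤ ctr1 P S s.sig s.ctr m

/-- One canonical round: everyone sends, then everyone receives each message in
`Dset` once. -/
noncomputable def cstep (s : CState A Msg St) : CState A Msg St where
  sig := fun a => (Dset P S N s).toList.foldl P.recv (P.send (s.sig a)).2
  ctr := fun m => if m ∈ Dset P S N s then 0 else ctr1 P S s.sig s.ctr m

noncomputable def canon : ℕ → CState A Msg St
  | 0 => ⟨fun a => P.init a, fun _ => 0⟩
  | k+1 => cstep P S N (canon k)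

end Canon

section Execution
variable {A Msg St : Type*} [DecidableEq A] [DecidableEq Msg]
variable (P : Protocol A Msg St) (S : Finset A) (N : ℕ)
variable {n : ℕ} (hn : 0 < n) (x : Fin n → A)

/-- Apply one event to a configuration. -/
def applyEv (e : Event n Msg) (c : (Fin n → St) × Multiset Msg) :
    (Fin n → St) × Multiset Msg :=
  match e with
  | .snd i => (Function.update c.1 i (P.send (c.1 i)).2, (P.send (c.1 i)).1 ::ₘ c.2)
  | .rcv i m => (Function.update c.1 i (P.recv (c.1 i) m), c.2.erase m)

def applyList (l : List (Event n Msg)) (c : (Fin n → St) × Multiset Msg) :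
    (Fin n → St) × Multiset Msg :=
  l.foldl (fun c e => applyEv P e c) c

/-- All receives occurring in `l` (applied sequentially from `c`) are of
messages present in transit. -/
def ValidFrom : (Fin n → St) × Multiset Msg → List (Event n Msg) → Prop
  | _, [] => True
  | c, e :: l => (∀ i m, e = .rcv i m → m ∈ c.2) ∧ ValidFrom (applyEv P e c) l

lemma applyList_nil (c) : applyList P ([] : List (Event n Msg)) c = c := rfl

lemma applyList_cons (e) (l : List (Event n Msg)) (c) :
    applyList P (e :: l) c = applyList P l (applyEv P e c) := rfl

lemma applyList_append (l₁ l₂ : List (Event n Msg)) (c) :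
    applyList P (l₁ ++ l₂) c = applyList P l₂ (applyList P l₁ c) :=
  List.foldl_append ..

lemma validFrom_append {l₁ l₂ : List (Event n Msg)} {c}
    (h₁ : ValidFrom P c l₁) (h₂ : ValidFrom P (applyList P l₁ c) l₂) :
    ValidFrom P c (l₁ ++ l₂) := by
  induction l₁ generalizing c with
  | nil => exact h₂
  | cons e l ih => exact ⟨h₁.1, ih h₁.2 h₂⟩

lemma stepRel_applyEv (e : Event n Msg) (c)
    (h : ∀ i m, e = .rcv i m → m ∈ c.2) : StepRel P e c (applyEv P e c) := by
  cases e with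
  | snd i => exact ⟨rfl, rfl⟩
  | rcv i m => exact ⟨h i m rfl, rfl, rfl⟩

lemma validFrom_step {l : List (Event n Msg)} {c} (hv : ValidFrom P c l) :
    ∀ o (h : o < l.length), ∀ i m, l[o] = .rcv i m →
      m ∈ (applyList P (l.take o) c).2 := by
  induction l generalizing c with
  | nil => intro o h; exact absurd h (by simp)
  | cons e l ih =>
    intro o h i m he
    cases o with
    | zero => exact hv.1 i m he
    | succ o =>
      rw [List.take_succ_cons, applyList_cons]
      exact ih hv.2 o (by simpa using h) i m he

def sendEvents : List (Event n Msg) := (List.finRange n).map Event.snd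

def recvEvents (m : Msg) : List (Event n Msg) :=
  (List.finRange n).map fun i => Event.rcv i m

/-- Send phase over a nodup list of agents. -/
lemma sendPhase (l : List (Fin n)) (hl : l.Nodup) (f : Fin n → St) (b : Multiset Msg) :
    applyList P (l.map Event.snd) (f, b) =
      (fun i => if i ∈ l then (P.send (f i)).2 else f i,
        b + (l.map fun i => (P.send (f i)).1 : Multiset Msg)) := by
  induction l generalizing f b with
  | nil => simp [applyList]
  | cons i l ih =>
    rw [List.map_cons, applyList_cons]
    show applyList P (l.map Event.snd)
      (Function.update f i (P.send (f i)).2, (P.send (f i)).1 ::ₘ b) = _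
    rw [ih (List.nodup_cons.1 hl).2 _ _]
    have hni : i ∉ l := (List.nodup_cons.1 hl).1
    simp only [Prod.mk.injEq]
    constructor
    · funext j
      by_cases hj : j ∈ l
      · have hji : j ≠ i := fun h => hni (h ▸ hj)
        simp [hj, Function.update_of_ne hji, List.mem_cons, hj]
      · by_cases hji : j = i
        · subst hji
          simp [hj, Function.update_self]
        · simp [hj, hji, Function.update_of_ne hji]
    · show (P.send (f i)).1 ::ₘ b + ↑(l.map fun j =>
        (P.send (Function.update f i (P.send (f i)).2 j)).1) = _
      have : (l.map fun j => (P.send (Function.update f i (P.send (f i)).2 j)).1)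
          = l.map fun j => (P.send (f j)).1 := by
        apply List.map_congr_left
        intro j hj
        have hji : j ≠ i := fun h => hni (h ▸ hj)
        rw [Function.update_of_ne hji]
      rw [this, List.map_cons]
      have h2 : ((((P.send (f i)).1 :: l.map fun j => (P.send (f j)).1) : List Msg) : Multiset Msg)
          = (P.send (f i)).1 ::ₘ ((l.map fun j => (P.send (f j)).1 : List Msg) : Multiset Msg) := rfl
      rw [h2, Multiset.add_cons, Multiset.cons_add]

lemma validFrom_sends (l : List (Fin n)) (c) :
    ValidFrom P (c) (l.map Event.snd) := by
  induction l generalizing c with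
  | nil => trivial
  | cons i l ih => exact ⟨by simp, ih _⟩

lemma validFrom_recvs (m : Msg) (l : List (Fin n)) (f : Fin n → St) (b : Multiset Msg)
    (h : l.length ≤ b.count m) : ValidFrom P (f, b) (l.map fun i => Event.rcv i m) := by
  induction l generalizing f b with
  | nil => trivial
  | cons i l ih =>
    refine ⟨?_, ?_⟩
    · intro i' m' h'
      injection h' with h1 h2
      subst h2
      show m ∈ b
      rw [← Multiset.count_pos]
      simp only [List.length_cons] at h
      omega
    · show ValidFrom P (Function.update f i (P.recv (f i) m), b.erase m) _
      apply ih
      rw [Multiset.count_erase_self]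
      simp at h ⊢
      omega

lemma recvPhase1 (m : Msg) (l : List (Fin n)) (hl : l.Nodup) (f : Fin n → St)
    (b : Multiset Msg) :
    applyList P (l.map fun i => Event.rcv i m) (f, b) =
      (fun i => if i ∈ l then P.recv (f i) m else f i,
        (fun b' => Multiset.erase b' m)^[l.length] b) := by
  induction l generalizing f b with
  | nil => simp [applyList]
  | cons i l ih =>
    rw [List.map_cons, applyList_cons]
    show applyList P (l.map fun j => Event.rcv j m)
      (Function.update f i (P.recv (f i) m), b.erase m) = _
    rw [ih (List.nodup_cons.1 hl).2 _ _]
    have hni : i ∉ l := (List.nodup_cons.1 hl).1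
    simp only [Prod.mk.injEq]
    constructor
    · funext j
      by_cases hj : j ∈ l
      · have hji : j ≠ i := fun h => hni (h ▸ hj)
        simp [hj, Function.update_of_ne hji]
      · by_cases hji : j = i
        · subst hji; simp [hj, Function.update_self]
        · simp [hj, hji, Function.update_of_ne hji]
    · rw [List.length_cons, Function.iterate_succ_apply]

lemma count_iterate_erase_ne (m m' : Msg) (hne : m' ≠ m) (j : ℕ) (b : Multiset Msg) :
    Multiset.count m' ((fun b' => Multiset.erase b' m)^[j] b) = Multiset.count m' b := by
  induction j generalizing b with
  | zero => rfl
  | succ j ih => rw [Function.iterate_succ_apply, ih, Multiset.count_erase_of_ne hne]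

/-- Receive block: deliver each message of `L` once to every agent. -/
lemma recvBlock (L : List Msg) (hL : L.Nodup) (f : Fin n → St) (b : Multiset Msg)
    (hb : ∀ m ∈ L, n ≤ b.count m) :
    ValidFrom P (f, b) (L.flatMap (recvEvents (n := n))) ∧
    (applyList P (L.flatMap (recvEvents (n := n))) (f, b)).1
      = (fun i => L.foldl P.recv (f i)) ∧
    ∀ m ∉ L, Multiset.count m (applyList P (L.flatMap (recvEvents (n := n))) (f, b)).2
      = Multiset.count m b := by
  induction L generalizing f b with
  | nil => exact ⟨trivial, rfl, fun m _ => rfl⟩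
  | cons m L ih =>
    have hmb : n ≤ b.count m := hb m (List.mem_cons_self)
    have hfr : (List.finRange n).length = n := List.length_finRange
    have hB1 : applyList P (recvEvents (n := n) m) (f, b)
        = (fun i => P.recv (f i) m, (fun b' => b'.erase m)^[n] b) := by
      rw [recvEvents, recvPhase1 P m (List.finRange n) (List.nodup_finRange n) f b]
      simp [hfr]
    have hcount1 : ∀ m' ∈ L, n ≤ Multiset.count m' ((fun b' => b'.erase m)^[n] b) := by
      intro m' hm'
      have hne : m' ≠ m := fun h => (List.nodup_cons.1 hL).1 (h ▸ hm')
      rw [count_iterate_erase_ne m m' hne]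
      exact hb m' (List.mem_cons_of_mem _ hm')
    have ihh := ih (List.nodup_cons.1 hL).2 (fun i => P.recv (f i) m)
      ((fun b' => b'.erase m)^[n] b) hcount1
    rw [List.flatMap_cons]
    refine ⟨?_, ?_, ?_⟩
    · apply validFrom_append
      · exact validFrom_recvs P m (List.finRange n) f b (by rw [hfr]; exact hmb)
      · rw [hB1]; exact ihh.1
    · rw [applyList_append, hB1, ihh.2.1]
      rfl
    · intro m' hm'
      rw [applyList_append, hB1, ihh.2.2 m' (fun h => hm' (List.mem_cons_of_mem _ h))]
      exact count_iterate_erase_ne m m' (fun h => hm' (h ▸ List.mem_cons_self)) n b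

noncomputable def eventsOf (s : CState A Msg St) : List (Event n Msg) :=
  sendEvents ++ ((Dset P S N s).toList.flatMap (recvEvents (n := n)))

/-- The main per-round lemma. -/
lemma mainStep (himg : ∀ a ∈ S, ∃ i, x i = a) (hNn : n ≤ N)
    (s : CState A Msg St) (b : Multiset Msg)
    (hc : ∀ m, s.ctr m ≤ b.count m) :
    ValidFrom P ((fun i => s.sig (x i)), b) (eventsOf P S N s) ∧
    (applyList P (eventsOf P S N s) ((fun i => s.sig (x i)), b)).1
      = (fun i => (cstep P S N s).sig (x i)) ∧
    ∀ m, (cstep P S N s).ctr m ≤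
      Multiset.count m (applyList P (eventsOf P S N s) ((fun i => s.sig (x i)), b)).2 := by
  set f : Fin n → St := fun i => s.sig (x i) with hf
  set M : Multiset Msg :=
    (((List.finRange n).map fun i => (P.send (f i)).1 : List Msg) : Multiset Msg) with hM
  have hsend : applyList P (sendEvents (n := n)) (f, b)
      = (fun i => (P.send (f i)).2, b + M) := by
    rw [sendEvents, sendPhase P (List.finRange n) (List.nodup_finRange n) f b]
    simp [hM]
  have hsent : ∀ m ∈ sentSet P S s.sig, 1 ≤ Multiset.count m M := by
    intro m hm
    rcases Finset.mem_image.1 hm with ⟨a, ha, rfl⟩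
    rcases himg a ha with ⟨i, rfl⟩
    rw [Nat.one_le_iff_ne_zero, ← Nat.pos_iff_ne_zero, Multiset.count_pos, hM]
    exact Multiset.mem_coe.2 (List.mem_map.2 ⟨i, List.mem_finRange i, rfl⟩)
  have hmid : ∀ m, ctr1 P S s.sig s.ctr m ≤ Multiset.count m (b + M) := by
    intro m
    rw [Multiset.count_add, ctr1]
    by_cases hm : m ∈ sentSet P S s.sig
    · have := hsent m hm
      have := hc m
      simp only [hm, if_true]
      omega
    · simp only [hm, if_false]
      have := hc m
      omega
  have hD : ∀ m ∈ (Dset P S N s).toList, n ≤ Multiset.count m (b + M) := by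
    intro m hm
    have hm' := Finset.mem_toList.1 hm
    have hN : N ≤ ctr1 P S s.sig s.ctr m := (Finset.mem_filter.1 hm').2
    have := hmid m
    omega
  have hrb := recvBlock P ((Dset P S N s).toList) (Finset.nodup_toList _)
    (fun i => (P.send (f i)).2) (b + M) hD
  have hev : eventsOf P S N s (n := n)
      = sendEvents ++ ((Dset P S N s).toList.flatMap (recvEvents (n := n))) := rfl
  refine ⟨?_, ?_, ?_⟩
  · rw [hev]
    apply validFrom_append
    · exact validFrom_sends P (List.finRange n) _
    · rw [hsend]; exact hrb.1
  · rw [hev, applyList_append, hsend, hrb.2.1]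
    rfl
  · intro m
    rw [hev, applyList_append, hsend]
    show (if m ∈ Dset P S N s then 0 else ctr1 P S s.sig s.ctr m) ≤ _
    by_cases hm : m ∈ Dset P S N s
    · simp [hm]
    · rw [if_neg hm, hrb.2.2 m (fun h => hm (Finset.mem_toList.1 h))]
      exact hmid m

noncomputable def roundEvents (k : ℕ) : List (Event n Msg) :=
  eventsOf P S N (canon P S N k)

noncomputable def roundConfig : ℕ → (Fin n → St) × Multiset Msg
  | 0 => (fun i => P.init (x i), 0)
  | k+1 => applyList P (roundEvents P S N (n := n) k) (roundConfig k)

lemma roundInv (himg : ∀ a ∈ S, ∃ i, x i = a) (hNn : n ≤ N) (k : ℕ) :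
    (roundConfig P S N x k).1 = (fun i => (canon P S N k).sig (x i)) ∧
    ∀ m, (canon P S N k).ctr m ≤ Multiset.count m (roundConfig P S N x k).2 := by
  induction k with
  | zero => exact ⟨rfl, by simp [roundConfig, canon]⟩
  | succ k ih =>
    have h := mainStep P S N x himg hNn (canon P S N k) (roundConfig P S N x k).2 ih.2
    rw [← ih.1, Prod.mk.eta] at h
    exact ⟨h.2.1, h.2.2⟩

lemma roundValid (himg : ∀ a ∈ S, ∃ i, x i = a) (hNn : n ≤ N) (k : ℕ) :
    ValidFrom P (roundConfig P S N x k) (roundEvents P S N (n := n) k) := by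
  have ih := roundInv P S N x himg hNn k
  have h := mainStep P S N x himg hNn (canon P S N k) (roundConfig P S N x k).2 ih.2
  rw [← ih.1, Prod.mk.eta] at h
  exact h.1

noncomputable def rlen (k : ℕ) : ℕ := (roundEvents P S N (n := n) k).length

noncomputable def rstart : ℕ → ℕ
  | 0 => 0
  | k+1 => rstart k + rlen P S N (n := n) k

include hn in
lemma rlen_pos (k : ℕ) : 0 < rlen P S N (n := n) k := by
  have : n ≤ rlen P S N (n := n) k := by
    simp [rlen, roundEvents, eventsOf, sendEvents]
  omega

include hn in
lemma rstart_lt_succ (k : ℕ) : rstart P S N (n := n) k < rstart P S N (n := n) (k+1) := by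
  have := rlen_pos P S N (n := n) hn k
  simp only [rstart]; omega

include hn in
lemma le_rstart (k : ℕ) : k ≤ rstart P S N (n := n) k := by
  induction k with
  | zero => exact Nat.zero_le _
  | succ k ih => have := rstart_lt_succ P S N hn k; omega

/-- The round that time `t` belongs to. -/
noncomputable def rnd : ℕ → ℕ
  | 0 => 0
  | t+1 => if t + 1 < rstart P S N (n := n) (rnd t + 1) then rnd t else rnd t + 1

noncomputable def off (t : ℕ) : ℕ := t - rstart P S N (n := n) (rnd P S N (n := n) t)

include hn in
lemma rnd_spec (t : ℕ) : rstart P S N (n := n) (rnd P S N (n := n) t) ≤ t ∧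
    t < rstart P S N (n := n) (rnd P S N (n := n) t + 1) := by
  induction t with
  | zero =>
    constructor
    · simp [rnd, rstart]
    · simpa [rnd, rstart] using rlen_pos P S N hn 0
  | succ t ih =>
    by_cases hlt : t + 1 < rstart P S N (n := n) (rnd P S N (n := n) t + 1)
    · rw [show rnd P S N (n := n) (t+1) = rnd P S N (n := n) t from if_pos hlt]
      exact ⟨le_trans ih.1 (Nat.le_succ t), hlt⟩
    · rw [show rnd P S N (n := n) (t+1) = rnd P S N (n := n) t + 1 from if_neg hlt]
      have h1 : t + 1 = rstart P S N (n := n) (rnd P S N (n := n) t + 1) := by omega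
      refine ⟨le_of_eq h1.symm, ?_⟩
      rw [h1]; exact rstart_lt_succ P S N hn _

include hn in
lemma rstart_mono : StrictMono (rstart P S N (n := n)) :=
  strictMono_nat_of_lt_succ (rstart_lt_succ P S N hn)

include hn in
lemma rnd_unique {k t : ℕ} (h1 : rstart P S N (n := n) k ≤ t)
    (h2 : t < rstart P S N (n := n) (k+1)) : rnd P S N (n := n) t = k := by
  have hs := rnd_spec P S N hn t
  have hm := rstart_mono P S N hn (n := n)
  set r := rnd P S N (n := n) t with hr
  rcases lt_trichotomy r k with h | h | h
  · have := hm.monotone (show r + 1 ≤ k from h)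
    omega
  · exact h
  · have := hm.monotone (show k + 1 ≤ r from h)
    omega

include hn in
lemma rnd_ge {k t : ℕ} (h : rstart P S N (n := n) k ≤ t) :
    k ≤ rnd P S N (n := n) t := by
  by_contra hlt
  push_neg at hlt
  have hs := rnd_spec P S N hn t
  have := (rstart_mono P S N hn (n := n)).monotone (show rnd P S N (n := n) t + 1 ≤ k from hlt)
  omega

noncomputable def execEv (t : ℕ) : Event n Msg :=
  (roundEvents P S N (n := n) (rnd P S N (n := n) t)).getD (off P S N (n := n) t)
    (Event.snd ⟨0, hn⟩)

noncomputable def execCfg : ℕ → (Fin n → St) × Multiset Msg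
  | 0 => (fun i => P.init (x i), 0)
  | t+1 => applyEv P (execEv P S N hn t) (execCfg t)

include hn in
lemma off_lt (t : ℕ) : off P S N (n := n) t < rlen P S N (n := n) (rnd P S N (n := n) t) := by
  have hs := rnd_spec P S N hn t
  have : rstart P S N (n := n) (rnd P S N (n := n) t + 1) =
    rstart P S N (n := n) (rnd P S N (n := n) t) + rlen P S N (n := n) (rnd P S N (n := n) t) := rfl
  simp only [off]; omega

include hn in
lemma execCfg_eq (t : ℕ) :
    execCfg P S N hn x t = applyList P
      ((roundEvents P S N (n := n) (rnd P S N (n := n) t)).take (off P S N (n := n) t))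
      (roundConfig P S N x (rnd P S N (n := n) t)) := by
  induction t with
  | zero =>
    have h0 : rnd P S N (n := n) 0 = 0 := rfl
    have h1 : off P S N (n := n) 0 = 0 := rfl
    rw [h0, h1]
    rfl
  | succ t ih =>
    have hs := rnd_spec P S N hn t
    have holt : off P S N (n := n) t < rlen P S N (n := n) (rnd P S N (n := n) t) :=
      off_lt P S N hn t
    set r := rnd P S N (n := n) t with hr
    set o := off P S N (n := n) t with ho
    set l := roundEvents P S N (n := n) r with hl
    have hlen : l.length = rlen P S N (n := n) r := rfl
    have hoo : o < l.length := by rw [hlen]; exact holt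
    have hevt : execEv P S N hn t = l[o] := by
      rw [execEv, ← hr, ← ho, ← hl]
      exact List.getD_eq_getElem l _ hoo
    have key : execCfg P S N hn x (t+1) =
        applyList P (l.take (o+1)) (roundConfig P S N x r) := by
      show applyEv P (execEv P S N hn t) (execCfg P S N hn x t) = _
      rw [ih, hevt, List.take_succ, List.getElem?_eq_getElem hoo]
      rw [applyList_append]
      rfl
    by_cases hc : t + 1 < rstart P S N (n := n) (r + 1)
    · have hrnd : rnd P S N (n := n) (t+1) = r := by
        show (if t + 1 < rstart P S N (n := n) (rnd P S N (n := n) t + 1) then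
          rnd P S N (n := n) t else rnd P S N (n := n) t + 1) = r
        rw [← hr, if_pos hc]
      have hoff : off P S N (n := n) (t+1) = o + 1 := by
        have h2 : o = t - rstart P S N (n := n) r := by rw [ho, off, ← hr]
        rw [off, hrnd]
        omega
      rw [hrnd, hoff, ← hl]
      exact key
    · have heq : t + 1 = rstart P S N (n := n) (r + 1) := by omega
      have hrnd : rnd P S N (n := n) (t+1) = r + 1 := by
        show (if t + 1 < rstart P S N (n := n) (rnd P S N (n := n) t + 1) then
          rnd P S N (n := n) t else rnd P S N (n := n) t + 1) = r + 1
        rw [← hr, if_neg hc]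
      have hoff : off P S N (n := n) (t+1) = 0 := by
        rw [off, hrnd, heq]
        omega
      have hfull : o + 1 = l.length := by
        have h2 : o = t - rstart P S N (n := n) r := by rw [ho, off, ← hr]
        rw [hlen]
        have h3 : rstart P S N (n := n) (r+1) = rstart P S N (n := n) r + rlen P S N (n := n) r := rfl
        omega
      rw [hrnd, hoff, List.take_zero, applyList_nil]
      show _ = applyList P (roundEvents P S N (n := n) r) (roundConfig P S N x r)
      rw [key, hfull, List.take_length]

include hn in
lemma execStep (himg : ∀ a ∈ S, ∃ i, x i = a) (hNn : n ≤ N) (t : ℕ) :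
    StepRel P (execEv P S N hn t) (execCfg P S N hn x t) (execCfg P S N hn x (t+1)) := by
  have holt : off P S N (n := n) t < rlen P S N (n := n) (rnd P S N (n := n) t) :=
    off_lt P S N hn t
  set r := rnd P S N (n := n) t with hr
  set o := off P S N (n := n) t with ho
  set l := roundEvents P S N (n := n) r with hl
  have hoo : o < l.length := holt
  have hevt : execEv P S N hn t = l[o] := by
    rw [execEv, ← hr, ← ho, ← hl]
    exact List.getD_eq_getElem l _ hoo
  have hcfg := execCfg_eq P S N hn x t
  rw [← hr, ← ho, ← hl] at hcfg
  have hnext : execCfg P S N hn x (t+1) =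
      applyEv P (execEv P S N hn t) (execCfg P S N hn x t) := rfl
  rw [hnext, hevt, hcfg]
  exact stepRel_applyEv P _ _
    (validFrom_step P (roundValid P S N x himg hNn r) o hoo)

noncomputable def theExec (himg : ∀ a ∈ S, ∃ i, x i = a) (hNn : n ≤ N) : Exec P n x where
  cfg := execCfg P S N hn x
  ev := execEv P S N hn
  init_cfg := rfl
  step := execStep P S N hn x himg hNn

lemma rcv_shape {L : List Msg} {e : Event n Msg}
    (he : e ∈ L.flatMap (recvEvents (n := n))) : ∃ j m, e = Event.rcv j m := by
  rcases List.mem_flatMap.1 he with ⟨m, _, hm⟩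
  rcases List.mem_map.1 hm with ⟨j, _, rfl⟩
  exact ⟨j, m, rfl⟩

include hn in
lemma ev_of_mem {k : ℕ} {e' : Event n Msg} (he : e' ∈ roundEvents P S N (n := n) k) :
    ∃ t, rstart P S N (n := n) k ≤ t ∧ t < rstart P S N (n := n) (k+1) ∧
      execEv P S N hn t = e' := by
  rcases List.mem_iff_getElem.1 he with ⟨o, hoo, hoe⟩
  refine ⟨rstart P S N (n := n) k + o, Nat.le_add_right _ _, ?_, ?_⟩
  · show _ < rstart P S N (n := n) k + rlen P S N (n := n) k
    exact Nat.add_lt_add_left hoo _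
  · have hlt : rstart P S N (n := n) k + o < rstart P S N (n := n) (k+1) := by
      show _ < rstart P S N (n := n) k + rlen P S N (n := n) k
      exact Nat.add_lt_add_left hoo _
    have hrnd : rnd P S N (n := n) (rstart P S N (n := n) k + o) = k :=
      rnd_unique P S N hn (Nat.le_add_right _ _) hlt
    have hoff : off P S N (n := n) (rstart P S N (n := n) k + o) = o := by
      rw [off, hrnd]; omega
    rw [execEv, hrnd, hoff, List.getD_eq_getElem _ _ hoo, hoe]

lemma snd_mem (k : ℕ) (i : Fin n) : Event.snd i ∈ roundEvents P S N (n := n) k :=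
  List.mem_append_left _ (List.mem_map.2 ⟨i, List.mem_finRange i, rfl⟩)

lemma rcv_mem (k : ℕ) (j : Fin n) {m : Msg} (hm : m ∈ Dset P S N (canon P S N k)) :
    Event.rcv j m ∈ roundEvents P S N (n := n) k :=
  List.mem_append_right _ (List.mem_flatMap.2
    ⟨m, Finset.mem_toList.2 hm, List.mem_map.2 ⟨j, List.mem_finRange j, rfl⟩⟩)

include hn in
/-- If an agent performs a send at time `t`, the message it sends belongs to the
canonical sent-set of the current round. -/
lemma send_char (himg : ∀ a ∈ S, ∃ i, x i = a) (hNn : n ≤ N) (hmem : ∀ i, x i ∈ S)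
    {t : ℕ} {i : Fin n} (hsd : execEv P S N hn t = Event.snd i) :
    (P.send ((execCfg P S N hn x t).1 i)).1 ∈ sentSet P S (canon P S N (rnd P S N (n := n) t)).sig := by
  have holt : off P S N (n := n) t < rlen P S N (n := n) (rnd P S N (n := n) t) :=
    off_lt P S N hn t
  set r := rnd P S N (n := n) t with hr
  set o := off P S N (n := n) t with ho
  set l := roundEvents P S N (n := n) r with hl
  have hoo : o < l.length := holt
  have hevt : execEv P S N hn t = l[o] := by
    rw [execEv, ← hr, ← ho, ← hl]
    exact List.getD_eq_getElem l _ hoo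
  have hsl : (sendEvents (n := n) (Msg := Msg)).length = n := by
    simp [sendEvents]
  by_cases hon : o < n
  · -- we are in the send phase
    have hsplit : l = sendEvents ++
        ((Dset P S N (canon P S N r)).toList.flatMap (recvEvents (n := n))) := rfl
    have hlo : l[o] = (sendEvents (n := n) (Msg := Msg))[o]'(by rw [hsl]; exact hon) := by
      rw [List.getElem_of_eq hsplit hoo]
      exact List.getElem_append_left (by rw [hsl]; exact hon)
    have hio : i = ⟨o, hon⟩ := by
      have : (sendEvents (n := n) (Msg := Msg))[o]'(by rw [hsl]; exact hon) =
          Event.snd ((List.finRange n)[o]'(by simpa using hon)) := by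
        simp [sendEvents]
      rw [hevt, hlo, this] at hsd
      have h2 : (List.finRange n)[o]'(by simpa using hon) = ⟨o, hon⟩ := by
        simp [List.getElem_finRange, Fin.cast]
      injection hsd with h3
      rw [← h3, h2]
    have htake : l.take o = ((List.finRange n).take o).map Event.snd := by
      rw [hl, roundEvents, eventsOf, List.take_append_of_le_length (by rw [hsl]; exact le_of_lt hon),
        sendEvents, List.map_take]
    have hnodup : ((List.finRange n).take o).Nodup :=
      (List.take_sublist o _).nodup (List.nodup_finRange n)
    have hnotin : i ∉ (List.finRange n).take o := by
      intro hin
      rcases List.mem_iff_getElem.1 hin with ⟨j, hj, hje⟩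
      have hjo : j < o := by
        have : ((List.finRange n).take o).length = min o (List.finRange n).length := List.length_take
        omega
      have hjn : j < (List.finRange n).length := by simp; omega
      have hfr : (List.finRange n)[j]'hjn = i := by
        exact List.getElem_take.symm.trans hje
      have hval : ((List.finRange n)[j]'hjn).val = j := by
        simp [List.getElem_finRange]
      rw [hfr, hio] at hval
      simp only [Fin.val_mk] at hval
      omega
    have hcfg := execCfg_eq P S N hn x t
    rw [← hr, ← ho, ← hl, htake] at hcfg
    have hrc := (roundInv P S N x himg hNn r).1
    have hsp := sendPhase P ((List.finRange n).take o) hnodup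
      (roundConfig P S N x r).1 (roundConfig P S N x r).2
    rw [Prod.mk.eta] at hsp
    have hst : (execCfg P S N hn x t).1 i = (roundConfig P S N x r).1 i := by
      rw [hcfg, hsp]
      simp [hnotin]
    rw [hst, hrc]
    exact Finset.mem_image.2 ⟨x i, hmem i, rfl⟩
  · -- impossible: receive-phase events are receives
    exfalso
    have hge : (sendEvents (n := n) (Msg := Msg)).length ≤ o := by rw [hsl]; omega
    have hlo : l[o] = ((Dset P S N (canon P S N r)).toList.flatMap (recvEvents (n := n)))[o - (sendEvents (n := n) (Msg := Msg)).length]'(by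
        have : l.length = (sendEvents (n := n) (Msg := Msg)).length +
          ((Dset P S N (canon P S N r)).toList.flatMap (recvEvents (n := n))).length := by
          rw [hl, roundEvents, eventsOf, List.length_append]
        omega) := by
      have hsplit : l = sendEvents ++
          ((Dset P S N (canon P S N r)).toList.flatMap (recvEvents (n := n))) := rfl
      rw [List.getElem_of_eq hsplit hoo]
      exact List.getElem_append_right hge
    have hmem2 := hlo ▸ List.getElem_mem
      (l := (Dset P S N (canon P S N r)).toList.flatMap (recvEvents (n := n)))
      (n := o - (sendEvents (n := n) (Msg := Msg)).length) (by
        have : l.length = (sendEvents (n := n) (Msg := Msg)).length +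
          ((Dset P S N (canon P S N r)).toList.flatMap (recvEvents (n := n))).length := by
          rw [hl, roundEvents, eventsOf, List.length_append]
        omega)
    rcases rcv_shape (n := n) hmem2 with ⟨j, m, hjm⟩
    rw [hevt, hjm] at hsd
    cases hsd

/-- Counter recurrence. -/
lemma ctr_succ (k : ℕ) (m : Msg) :
    (canon P S N (k+1) : CState A Msg St).ctr m =
      if m ∈ Dset P S N (canon P S N k) then 0
      else ctr1 P S (canon P S N k).sig (canon P S N k).ctr m := rfl

/-- A message sent in infinitely many rounds is delivered in infinitely many
rounds. -/
lemma delivered (m : Msg)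
    (hs : ∀ T, ∃ k, T ≤ k ∧ m ∈ sentSet P S (canon P S N k : CState A Msg St).sig) :
    ∀ T, ∃ k, T ≤ k ∧ m ∈ Dset P S N (canon P S N k : CState A Msg St) := by
  by_contra hcon
  push_neg at hcon
  rcases hcon with ⟨T, hT⟩
  have mono : ∀ k, T ≤ k → ∀ k', k ≤ k' →
      (canon P S N k : CState A Msg St).ctr m ≤ (canon P S N k' : CState A Msg St).ctr m := by
    intro k hk k' hk'
    induction k' with
    | zero => rw [Nat.le_zero.1 hk']
    | succ k' ih =>
      rcases Nat.lt_or_ge k (k'+1) with h | h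
      · have hk'' : k ≤ k' := by omega
        refine le_trans (ih hk'') ?_
        rw [ctr_succ, if_neg (hT k' (le_trans hk hk''))]
        show _ ≤ (canon P S N k' : CState A Msg St).ctr m + _
        omega
      · rw [Nat.le_antisymm hk' h]
  have grow : ∀ j, ∃ k, T ≤ k ∧ j ≤ (canon P S N k : CState A Msg St).ctr m := by
    intro j
    induction j with
    | zero => exact ⟨T, le_refl T, Nat.zero_le _⟩
    | succ j ih =>
      rcases ih with ⟨k, hk, hj⟩
      rcases hs k with ⟨k2, hk2, hsent⟩
      refine ⟨k2 + 1, by omega, ?_⟩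
      rw [ctr_succ, if_neg (hT k2 (by omega)), ctr1]
      rw [if_pos hsent]
      have := mono k hk k2 hk2
      omega
  rcases grow N with ⟨k, hk, hN⟩
  rcases hs k with ⟨k2, hk2, hsent⟩
  apply hT k2 (by omega)
  refine Finset.mem_filter.2 ⟨hsent, ?_⟩
  rw [ctr1, if_pos hsent]
  have := mono k hk k2 hk2
  omega

include hn in
lemma theExec_fair (himg : ∀ a ∈ S, ∃ i, x i = a) (hNn : n ≤ N) (hmem : ∀ i, x i ∈ S) :
    LocallyFair (theExec P S N hn x himg hNn) := by
  constructor
  · intro i T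
    rcases ev_of_mem P S N hn (snd_mem P S N (n := n) T i) with ⟨t, ht1, _, ht3⟩
    exact ⟨t, le_trans (le_rstart P S N hn T) ht1, Or.inl ht3⟩
  · intro m hm j T
    have hs : ∀ T', ∃ k, T' ≤ k ∧ m ∈ sentSet P S (canon P S N k : CState A Msg St).sig := by
      intro T'
      rcases hm with ⟨i, hi⟩
      rcases hi (rstart P S N (n := n) T') with ⟨t, ht, hsd, hmsg⟩
      refine ⟨rnd P S N (n := n) t, rnd_ge P S N hn ht, ?_⟩
      rw [← hmsg]
      exact send_char P S N hn x himg hNn hmem hsd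
    rcases delivered P S N m hs T with ⟨k, hk, hD⟩
    rcases ev_of_mem P S N hn (rcv_mem P S N (n := n) k j hD) with ⟨t, ht1, _, ht3⟩
    exact ⟨t, le_trans hk (le_trans (le_rstart P S N hn k) ht1), ht3⟩

include hn in
lemma output_at_round (himg : ∀ a ∈ S, ∃ i, x i = a) (hNn : n ≤ N) (k : ℕ) :
    ((theExec P S N hn x himg hNn).cfg (rstart P S N (n := n) k)).1 =
      fun i => (canon P S N k : CState A Msg St).sig (x i) := by
  have hrnd : rnd P S N (n := n) (rstart P S N (n := n) k) = k :=
    rnd_unique P S N hn (le_refl _) (rstart_lt_succ P S N hn k)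
  have hoff : off P S N (n := n) (rstart P S N (n := n) k) = 0 := by
    rw [off, hrnd]; omega
  have := execCfg_eq P S N hn x (rstart P S N (n := n) k)
  rw [hrnd, hoff, List.take_zero, applyList_nil] at this
  show (execCfg P S N hn x (rstart P S N (n := n) k)).1 = _
  rw [this]
  exact (roundInv P S N x himg hNn k).1

end Execution

end AnonProof

/-- Any predicate stably computable in the anonymous asynchronous
message-passing model with local fairness (even with unbounded states and
messages) is determined by the set of input values present. -/
theorem local_fairness_weak {A Msg St : Type*} [Countable A] [DecidableEq Msg]
    (P : Protocol A Msg St) (ψ : Multiset A → Bool)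
    (h : StablyComputes P ψ)
    (n n' : ℕ) (hn : 0 < n) (hn' : 0 < n')
    (x : Fin n → A) (x' : Fin n' → A)
    (hsupp : ∀ a : A, (∃ i, x i = a) ↔ (∃ i, x' i = a)) :
    ψ (inputMultiset x) = ψ (inputMultiset x') := by
  classical
  letI : DecidableEq A := Classical.decEq A
  set S : Finset A := Finset.image x Finset.univ with hS
  have hmem : ∀ i, x i ∈ S := fun i => Finset.mem_image.2 ⟨i, Finset.mem_univ i, rfl⟩
  have himg : ∀ a ∈ S, ∃ i, x i = a := by
    intro a ha
    rcases Finset.mem_image.1 ha with ⟨i, _, hi⟩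
    exact ⟨i, hi⟩
  have himg' : ∀ a ∈ S, ∃ i, x' i = a := fun a ha => (hsupp a).1 (himg a ha)
  have hmem' : ∀ i, x' i ∈ S := by
    intro i
    rcases (hsupp (x' i)).2 ⟨i, rfl⟩ with ⟨j, hj⟩
    exact hj ▸ hmem j
  set N := n + n' with hN
  have hNn : n ≤ N := Nat.le_add_right n n'
  have hNn' : n' ≤ N := Nat.le_add_left n' n
  set e := AnonProof.theExec P S N hn x himg hNn with he
  set e' := AnonProof.theExec P S N hn' x' himg' hNn' with he'
  rcases h n hn x e (AnonProof.theExec_fair P S N hn x himg hNn hmem) with ⟨T, hT⟩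
  rcases h n' hn' x' e' (AnonProof.theExec_fair P S N hn' x' himg' hNn' hmem') with ⟨T', hT'⟩
  set k := max T T' with hk
  have hout := AnonProof.output_at_round P S N hn x himg hNn k
  have hout' := AnonProof.output_at_round P S N hn' x' himg' hNn' k
  have h1 := hT (AnonProof.rstart P S N (n := n) k)
    (le_trans (le_max_left T T') (AnonProof.le_rstart P S N hn k)) ⟨0, hn⟩
  rcases (hsupp (x ⟨0, hn⟩)).1 ⟨⟨0, hn⟩, rfl⟩ with ⟨j0, hj0⟩
  have h2 := hT' (AnonProof.rstart P S N (n := n') k)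
    (le_trans (le_max_right T T') (AnonProof.le_rstart P S N hn' k)) j0
  have e1 : P.out ((AnonProof.canon P S N k : AnonProof.CState A Msg St).sig (x ⟨0, hn⟩))
      = ψ (inputMultiset x) := by
    rw [← congrFun hout ⟨0, hn⟩]
    exact h1
  have e2 : P.out ((AnonProof.canon P S N k : AnonProof.CState A Msg St).sig (x' j0))
      = ψ (inputMultiset x') := by
    rw [← congrFun hout' j0]
    exact h2
  rw [← e1, ← e2, hj0]
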